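/- arXiv:2003.06041 — 8 statements merged into one kernel-verified Lean document; each statement's English description precedes it below -/
import Mathlib

section
/- There is no function A : ℝ × ℝ → ℝ that is simultaneously (i) sound (A(ρ₁,ρ₂) ≥ 0 if and only if ρ₁ ≥ 0 and ρ₂ ≥ 0), (ii) idempotent (A(ρ,ρ) = ρ for all ρ), and (iii) continuously differentiable on all of ℝ². -/
/-- There is no binary AND-operator that is simultaneously sound, idempotent,
and continuously differentiable on all of ℝ². -/
theorem no_sound_idempotent_smooth_and :
    ¬ ∃ A : ℝ × ℝ → ℝ,
      (∀ p : ℝ × ℝ, 0 ≤ A p ↔ 0 ≤ p.1 ∧ 0 ≤ p.2) ∧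
      (∀ r : ℝ, A (r, r) = r) ∧
      ContDiff ℝ 1 A := by
  rintro ⟨A, hsound, hidem, hsmooth⟩
  have hdiff : Differentiable ℝ A := hsmooth.differentiable one_ne_zero
  set L := fderiv ℝ A (0, 0) with hLdef
  have hF : HasFDerivAt A L ((0 : ℝ), (0 : ℝ)) := (hdiff _).hasFDerivAt
  -- along the diagonal the derivative is 1
  have hdiag : HasDerivAt (fun r : ℝ => A (r, r)) (L (1, 1)) 0 := by
    have hc : HasDerivAt (fun r : ℝ => ((r, r) : ℝ × ℝ)) ((1 : ℝ), (1 : ℝ)) 0 :=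
      (hasDerivAt_id 0).prodMk (hasDerivAt_id 0)
    exact hF.comp_hasDerivAt_of_eq 0 hc rfl
  have hone : L (1, 1) = 1 := by
    have h1 : HasDerivAt (fun r : ℝ => A (r, r)) 1 0 := by
      have heq : (fun r : ℝ => A (r, r)) = fun r => r := funext hidem
      rw [heq]; exact hasDerivAt_id 0
    exact hdiag.unique h1
  -- key: along a curve through (0,0) that stays in the "negative" region,
  -- the directional derivative vanishes
  have key : ∀ (c : ℝ → ℝ × ℝ) (v : ℝ × ℝ), HasDerivAt c v 0 → c 0 = (0, 0) →
      (∀ t : ℝ, t ≠ 0 → ¬ (0 ≤ (c t).1 ∧ 0 ≤ (c t).2)) → L v = 0 := by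
    intro c v hc hc0 hneg
    have hd : HasDerivAt (fun t => A (c t)) (L v) 0 :=
      hF.comp_hasDerivAt_of_eq 0 hc hc0.symm
    have hmax : IsLocalMax (fun t => A (c t)) 0 := by
      apply IsMaxOn.isLocalMax (s := Set.univ) _ Filter.univ_mem
      intro t _
      simp only [Set.mem_setOf_eq]
      rcases eq_or_ne t 0 with rfl | ht
      · exact le_rfl
      · have h1 : ¬ 0 ≤ A (c t) := fun h => hneg t ht ((hsound _).mp h)
        have h2 : A (c 0) = 0 := by rw [hc0]; exact hidem 0
        linarith [lt_of_not_ge h1]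
    exact hmax.hasDerivAt_eq_zero hd
  have h10 : L (1, 0) = 0 := by
    apply key (fun t => (t, -t ^ 3)) (1, 0)
    · have h1 : HasDerivAt (fun t : ℝ => t) 1 0 := hasDerivAt_id 0
      have h2 : HasDerivAt (fun t : ℝ => -t ^ 3) 0 0 := by
        have := (hasDerivAt_pow 3 (0 : ℝ)).neg
        exact this.congr_deriv (by norm_num)
      exact h1.prodMk h2
    · norm_num
    · intro t ht h
      obtain ⟨h1, h2⟩ := h
      simp only at h1 h2
      nlinarith [pow_pos (lt_of_le_of_ne h1 (Ne.symm ht)) 3]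
  have h01 : L (0, 1) = 0 := by
    apply key (fun t => (-t ^ 3, t)) (0, 1)
    · have h1 : HasDerivAt (fun t : ℝ => t) 1 0 := hasDerivAt_id 0
      have h2 : HasDerivAt (fun t : ℝ => -t ^ 3) 0 0 := by
        have := (hasDerivAt_pow 3 (0 : ℝ)).neg
        exact this.congr_deriv (by norm_num)
      exact h2.prodMk h1
    · norm_num
    · intro t ht h
      obtain ⟨h1, h2⟩ := h
      simp only at h1 h2
      nlinarith [pow_pos (lt_of_le_of_ne h2 (Ne.symm ht)) 3]
  have hadd : L (1, 1) = L (1, 0) + L (0, 1) := by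
    rw [← L.map_add]
    norm_num
  rw [hone, h10, h01] at hadd
  linarith
end

section
/- Suppose A : (Fin M → ℝ) → ℝ is sound, continuous, min/max bounded, and symmetric, and fix values ρ_j > 0 for j ≠ 1. If the partial derivative of A with respect to ρ₁ exists at ρ₁ = 0 (with the other arguments fixed at the positive values ρ_j), then this partial derivative equals 1. -/
/-- The minimum of the components of `ρ`. -/
noncomputable def rmin {M : ℕ} (hM : 0 < M) (ρ : Fin M → ℝ) : ℝ :=
  Finset.univ.inf' (by rwa [Finset.univ_nonempty_iff, ← Fin.pos_iff_nonempty]) ρ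

/-- The maximum of the components of `ρ`. -/
noncomputable def rmax {M : ℕ} (hM : 0 < M) (ρ : Fin M → ℝ) : ℝ :=
  Finset.univ.sup' (by rwa [Finset.univ_nonempty_iff, ← Fin.pos_iff_nonempty]) ρ

/-- If an AND-operator is sound, continuous, min/max bounded and symmetric, and the
other arguments are fixed at positive values, then the partial derivative with respect
to the remaining argument at `0`, if it exists, equals `1`. -/
theorem partial_deriv_at_zero_eq_one
    (M : ℕ) (hM : 0 < M) (A : (Fin M → ℝ) → ℝ)
    (hsound : ∀ ρ : Fin M → ℝ, 0 ≤ A ρ ↔ ∀ i, 0 ≤ ρ i)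
    (hcont : Continuous A)
    (hbound : ∀ ρ : Fin M → ℝ, rmin hM ρ ≤ A ρ ∧ A ρ ≤ rmax hM ρ)
    (hsym : ∀ (σ : Equiv.Perm (Fin M)) (ρ : Fin M → ℝ), A (ρ ∘ σ) = A ρ)
    (i₀ : Fin M) (ρ : Fin M → ℝ) (hpos : ∀ j, j ≠ i₀ → 0 < ρ j)
    (d : ℝ)
    (hderiv : HasDerivAt (fun t : ℝ => A (Function.update ρ i₀ t)) d 0) :
    d = 1 := by
  set f : ℝ → ℝ := fun t => A (Function.update ρ i₀ t) with hf
  -- lower bound: f t ≥ t whenever t ≤ ρ j for all j ≠ i₀ (in particular t ≤ 0 or t small)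
  have hlow : ∀ t : ℝ, (∀ j, j ≠ i₀ → t ≤ ρ j) → t ≤ f t := by
    intro t ht
    refine le_trans ?_ (hbound (Function.update ρ i₀ t)).1
    apply Finset.le_inf'
    intro i _
    rcases eq_or_ne i i₀ with h | h
    · subst h; simp
    · rw [Function.update_of_ne h]; exact ht i h
  -- f t < 0 for t < 0
  have hneg : ∀ t : ℝ, t < 0 → f t < 0 := by
    intro t ht
    by_contra h
    push_neg at h
    have := (hsound _).mp h i₀
    simp at this
    linarith
  -- f 0 = 0
  have hf0 : f 0 = 0 := by
    have h1 : 0 ≤ f 0 := by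
      apply (hsound _).mpr
      intro i
      rcases eq_or_ne i i₀ with h | h
      · subst h; simp
      · rw [Function.update_of_ne h]; exact (hpos i h).le
    have hcf : Continuous f := by
      apply hcont.comp
      apply continuous_pi
      intro i
      rcases eq_or_ne i i₀ with h | h
      · subst h
        simp only [Function.update_self]
        exact continuous_id
      · simp only [Function.update_of_ne h]; exact continuous_const
    have h2 : f 0 ≤ 0 := by
      refine le_of_tendsto (hcf.continuousAt.mono_left nhdsWithin_le_nhds :
        Filter.Tendsto f (nhdsWithin 0 (Set.Iio 0)) (nhds (f 0))) ?_
      filter_upwards [self_mem_nhdsWithin] with t (ht : t < 0)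
      exact (hneg t ht).le
    linarith
  -- slope tends to d
  have hslope : Filter.Tendsto (fun t => f t / t) (nhdsWithin 0 {0}ᶜ) (nhds d) := by
    have := hasDerivAt_iff_tendsto_slope.mp hderiv
    refine this.congr' ?_
    filter_upwards with t
    simp [slope, hf0, div_eq_inv_mul]
  -- ε with ε ≤ ρ j for all j ≠ i₀
  obtain ⟨ε, hε, hερ⟩ : ∃ ε : ℝ, 0 < ε ∧ ∀ j, j ≠ i₀ → ε ≤ ρ j := by
    rcases (Finset.univ.erase i₀).eq_empty_or_nonempty with h | h
    · exact ⟨1, one_pos, fun j hj => absurd (Finset.mem_erase.mpr ⟨hj, Finset.mem_univ j⟩)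
        (by simp [h])⟩
    · refine ⟨(Finset.univ.erase i₀).inf' h ρ, ?_, ?_⟩
      · rw [Finset.lt_inf'_iff]
        intro j hj
        exact hpos j (Finset.mem_erase.mp hj).1
      · intro j hj
        exact Finset.inf'_le _ (Finset.mem_erase.mpr ⟨hj, Finset.mem_univ j⟩)
  -- d ≥ 1 from the right
  have hd1 : 1 ≤ d := by
    have hR : Filter.Tendsto (fun t => f t / t) (nhdsWithin 0 (Set.Ioi 0)) (nhds d) :=
      hslope.mono_left (nhdsWithin_mono 0 (fun x hx => ne_of_gt hx))
    refine ge_of_tendsto hR ?_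
    filter_upwards [Ioo_mem_nhdsGT_of_mem (Set.mem_Ico.mpr ⟨le_refl 0, hε⟩)] with t ht
    obtain ⟨ht0, htε⟩ := ht
    have h1 : t ≤ f t := hlow t (fun j hj => le_trans htε.le (hερ j hj))
    rw [le_div_iff₀ ht0]
    linarith
  -- d ≤ 1 from the left
  have hd2 : d ≤ 1 := by
    have hL : Filter.Tendsto (fun t => f t / t) (nhdsWithin 0 (Set.Iio 0)) (nhds d) :=
      hslope.mono_left (nhdsWithin_mono 0 (fun x hx => ne_of_lt hx))
    refine le_of_tendsto hL ?_
    filter_upwards [self_mem_nhdsWithin] with t (ht : t < 0)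
    have h1 : t ≤ f t := hlow t (fun j hj => le_trans ht.le (hpos j hj).le)
    have h2 : (f t - t) / t ≤ 0 := div_nonpos_of_nonneg_of_nonpos (by linarith) ht.le
    have h3 : f t / t - 1 = (f t - t) / t := by
      rw [sub_div, div_self (ne_of_lt ht)]
    linarith
  linarith
end

section
/- For ν > 0 and ρ : Fin M → ℝ with ρ_min := min_i ρ_i < 0, define A(ρ) = (Σ_i ρ_min·e^{ρ̃_i}·e^{ν ρ̃_i}) / (Σ_i e^{ν ρ̃_i}) where ρ̃_i = (ρ_i − ρ_min)/ρ_min. Then A(ρ) < 0, and moreover ρ_min ≤ A(ρ) ≤ max_i ρ_i. -/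
/-- The negative branch of the new AND-operator is strictly negative and min/max
bounded when `ρ_min < 0`. -/
theorem negative_branch_sound_and_bounded
    (M : ℕ) (hM : 0 < M) (ν : ℝ) (hν : 0 < ν)
    (ρ : Fin M → ℝ) (hneg : rmin hM ρ < 0) :
    (∑ i, rmin hM ρ * Real.exp ((ρ i - rmin hM ρ) / rmin hM ρ) *
        Real.exp (ν * ((ρ i - rmin hM ρ) / rmin hM ρ))) /
      (∑ i, Real.exp (ν * ((ρ i - rmin hM ρ) / rmin hM ρ))) < 0 ∧
    rmin hM ρ ≤
      (∑ i, rmin hM ρ * Real.exp ((ρ i - rmin hM ρ) / rmin hM ρ) *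
          Real.exp (ν * ((ρ i - rmin hM ρ) / rmin hM ρ))) /
        (∑ i, Real.exp (ν * ((ρ i - rmin hM ρ) / rmin hM ρ))) ∧
    (∑ i, rmin hM ρ * Real.exp ((ρ i - rmin hM ρ) / rmin hM ρ) *
        Real.exp (ν * ((ρ i - rmin hM ρ) / rmin hM ρ))) /
      (∑ i, Real.exp (ν * ((ρ i - rmin hM ρ) / rmin hM ρ))) ≤ rmax hM ρ := by
  set m := rmin hM ρ with hm
  have hne : (Finset.univ : Finset (Fin M)).Nonempty := by
    rwa [Finset.univ_nonempty_iff, ← Fin.pos_iff_nonempty]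
  have hmle : ∀ i, m ≤ ρ i := fun i => Finset.inf'_le _ (Finset.mem_univ i)
  have hmax : ∀ i, ρ i ≤ rmax hM ρ := fun i => Finset.le_sup' _ (Finset.mem_univ i)
  set w : Fin M → ℝ := fun i => Real.exp (ν * ((ρ i - m) / m)) with hw
  have hwpos : ∀ i, 0 < w i := fun i => Real.exp_pos _
  have hD : 0 < ∑ i, w i := Finset.sum_pos (fun i _ => hwpos i) hne
  -- value bounds
  have hvlb : ∀ i, m ≤ m * Real.exp ((ρ i - m) / m) := by
    intro i
    have ht : (ρ i - m) / m ≤ 0 :=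
      div_nonpos_of_nonneg_of_nonpos (by linarith [hmle i]) hneg.le
    have : Real.exp ((ρ i - m) / m) ≤ 1 := Real.exp_le_one_iff.mpr ht
    nlinarith
  have hvub : ∀ i, m * Real.exp ((ρ i - m) / m) ≤ ρ i := by
    intro i
    have h1 : 1 + (ρ i - m) / m ≤ Real.exp ((ρ i - m) / m) := by
      linarith [Real.add_one_le_exp ((ρ i - m) / m)]
    have h2 : m * Real.exp ((ρ i - m) / m) ≤ m * (1 + (ρ i - m) / m) :=
      mul_le_mul_of_nonpos_left h1 hneg.le
    have h3 : m * (1 + (ρ i - m) / m) = ρ i := by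
      rw [mul_add, mul_one, mul_div_cancel₀ _ (ne_of_lt hneg)]; ring
    linarith
  have hvneg : ∀ i, m * Real.exp ((ρ i - m) / m) < 0 := fun i =>
    mul_neg_of_neg_of_pos hneg (Real.exp_pos _)
  refine ⟨?_, ?_, ?_⟩
  · exact div_neg_of_neg_of_pos
      (Finset.sum_neg (fun i _ => mul_neg_of_neg_of_pos (hvneg i) (hwpos i)) hne) hD
  · rw [le_div_iff₀ hD, Finset.mul_sum]
    exact Finset.sum_le_sum fun i _ =>
      mul_le_mul_of_nonneg_right (hvlb i) (hwpos i).le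
  · rw [div_le_iff₀ hD, Finset.mul_sum]
    exact Finset.sum_le_sum fun i _ =>
      mul_le_mul_of_nonneg_right ((hvub i).trans (hmax i)) (hwpos i).le
end

section
/- The newly proposed AND-operator A_ν is sound: A_ν(ρ₁,…,ρ_M) ≥ 0 if and only if ρ_i ≥ 0 for all i. More precisely, A_ν(ρ) < 0 when min_i ρ_i < 0, A_ν(ρ) > 0 when min_i ρ_i > 0, and A_ν(ρ) = 0 when min_i ρ_i = 0. -/
open Finset

/-- The newly proposed AND-operator `A_ν`. -/
noncomputable def Anu (ν : ℝ) {M : ℕ} (hM : 0 < M) (ρ : Fin M → ℝ) : ℝ :=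
  if rmin hM ρ < 0 then
    (∑ i, rmin hM ρ * Real.exp ((1 + ν) * ((ρ i - rmin hM ρ) / rmin hM ρ))) /
      (∑ i, Real.exp (ν * ((ρ i - rmin hM ρ) / rmin hM ρ)))
  else if 0 < rmin hM ρ then
    (∑ i, ρ i * Real.exp (-ν * ((ρ i - rmin hM ρ) / rmin hM ρ))) /
      (∑ i, Real.exp (-ν * ((ρ i - rmin hM ρ) / rmin hM ρ)))
  else 0

lemma univ_ne {M : ℕ} (hM : 0 < M) : (Finset.univ : Finset (Fin M)).Nonempty := by
  rwa [Finset.univ_nonempty_iff, ← Fin.pos_iff_nonempty]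

lemma rmin_le {M : ℕ} (hM : 0 < M) (ρ : Fin M → ℝ) (i : Fin M) : rmin hM ρ ≤ ρ i :=
  Finset.inf'_le _ (Finset.mem_univ i)

lemma Anu_neg (ν : ℝ) (hν : 0 < ν) {M : ℕ} (hM : 0 < M) (ρ : Fin M → ℝ)
    (h : rmin hM ρ < 0) : Anu ν hM ρ < 0 := by
  rw [Anu, if_pos h]
  apply div_neg_of_neg_of_pos
  · apply Finset.sum_neg (fun i _ => mul_neg_of_neg_of_pos h (Real.exp_pos _))
      (univ_ne hM)
  · exact Finset.sum_pos (fun i _ => Real.exp_pos _) (univ_ne hM)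

lemma Anu_pos (ν : ℝ) (hν : 0 < ν) {M : ℕ} (hM : 0 < M) (ρ : Fin M → ℝ)
    (h : 0 < rmin hM ρ) : 0 < Anu ν hM ρ := by
  rw [Anu, if_neg (not_lt.2 h.le), if_pos h]
  apply div_pos
  · exact Finset.sum_pos (fun i _ => mul_pos (lt_of_lt_of_le h (rmin_le hM ρ i))
      (Real.exp_pos _)) (univ_ne hM)
  · exact Finset.sum_pos (fun i _ => Real.exp_pos _) (univ_ne hM)

lemma Anu_zero (ν : ℝ) {M : ℕ} (hM : 0 < M) (ρ : Fin M → ℝ)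
    (h : rmin hM ρ = 0) : Anu ν hM ρ = 0 := by
  rw [Anu, if_neg (by simp [h]), if_neg (by simp [h])]

/-- The new AND-operator is sound: it is negative, zero, or positive according to the
sign of the minimal argument. -/
theorem Anu_sound (ν : ℝ) (hν : 0 < ν) (M : ℕ) (hM : 0 < M) (ρ : Fin M → ℝ) :
    ((0 ≤ Anu ν hM ρ ↔ ∀ i, 0 ≤ ρ i) ∧
      (rmin hM ρ < 0 → Anu ν hM ρ < 0) ∧
      (0 < rmin hM ρ → 0 < Anu ν hM ρ) ∧
      (rmin hM ρ = 0 → Anu ν hM ρ = 0)) := by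
  refine ⟨?_, Anu_neg ν hν hM ρ, Anu_pos ν hν hM ρ, Anu_zero ν hM ρ⟩
  constructor
  · intro h i
    by_contra hi
    push_neg at hi
    have hmin : rmin hM ρ < 0 := lt_of_le_of_lt (rmin_le hM ρ i) hi
    exact absurd h (not_le.2 (Anu_neg ν hν hM ρ hmin))
  · intro h
    have hmin : 0 ≤ rmin hM ρ := Finset.le_inf' _ _ fun i _ => h i
    rcases hmin.lt_or_eq with h' | h'
    · exact (Anu_pos ν hν hM ρ h').le
    · exact (Anu_zero ν hM ρ h'.symm).ge
end

section
/- The newly proposed AND-operator A_ν is scale-invariant: for every α > 0 and every ρ : Fin M → ℝ, A_ν(α·ρ₁,…,α·ρ_M) = α·A_ν(ρ₁,…,ρ_M). -/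
open Finset

lemma rmin_smul {M : ℕ} (hM : 0 < M) (α : ℝ) (hα : 0 < α) (ρ : Fin M → ℝ) :
    rmin hM (fun i => α * ρ i) = α * rmin hM ρ := by
  unfold rmin
  rw [Finset.apply_inf'_eq_inf'_comp _ (fun x => α * x)]
  · rfl
  · intro x y
    exact mul_min_of_nonneg _ _ hα.le

/-- The new AND-operator is scale-invariant. -/
theorem Anu_scale_invariant (ν : ℝ) (hν : 0 < ν) (M : ℕ) (hM : 0 < M)
    (α : ℝ) (hα : 0 < α) (ρ : Fin M → ℝ) :
    Anu ν hM (fun i => α * ρ i) = α * Anu ν hM ρ := by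
  have hmin := rmin_smul hM α hα ρ
  set m := rmin hM ρ with hm
  unfold Anu
  rw [hmin, ← hm]
  have hratio : m ≠ 0 → ∀ i, (α * ρ i - α * m) / (α * m) = (ρ i - m) / m := by
    intro hne i
    rw [← mul_sub, mul_div_mul_left _ _ (ne_of_gt hα)]
  rcases lt_trichotomy m 0 with h | h | h
  · have hαm : α * m < 0 := mul_neg_of_pos_of_neg hα h
    rw [if_pos hαm, if_pos h]
    simp only [hratio (ne_of_lt h)]
    rw [← mul_div_assoc]
    congr 1
    rw [Finset.mul_sum]
    exact Finset.sum_congr rfl (fun i _ => by ring)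
  · rw [h]
    simp
  · have hαm : 0 < α * m := mul_pos hα h
    rw [if_neg (not_lt.2 hαm.le), if_pos hαm, if_neg (not_lt.2 h.le), if_pos h]
    simp only [hratio (ne_of_gt h)]
    rw [← mul_div_assoc]
    congr 1
    rw [Finset.mul_sum]
    exact Finset.sum_congr rfl (fun i _ => by ring)
end

section
/- For the newly proposed AND-operator A_ν with ν > 0 and fixed ρ_j > 0 for j ≠ 1, the limit of A_ν(ρ₁,ρ₂,…,ρ_M) as ρ₁ → 0 (from either side, with the other arguments held fixed at positive values) equals 0, and the limit of A_ν(ρ₁,ρ₂,…,ρ_M)/ρ₁ as ρ₁ → 0 equals 1. -/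
open Finset

open Filter Topology

/-- The inverse function tends to `-∞` as its argument tends to `0` from the left. -/
lemma aux_inv_atBot : Tendsto (fun t : ℝ => t⁻¹) (nhdsWithin 0 (Set.Iio 0)) atBot := by
  have hneg : Tendsto (fun t : ℝ => -t) (nhdsWithin 0 (Set.Iio 0))
      (nhdsWithin 0 (Set.Ioi 0)) := by
    apply tendsto_nhdsWithin_of_tendsto_nhds_of_eventually_within
    · simpa using (continuous_neg.tendsto (0 : ℝ)).mono_left nhdsWithin_le_nhds
    · filter_upwards [self_mem_nhdsWithin] with t ht
      simpa using ht
  have h2 : Tendsto (fun t : ℝ => (-t)⁻¹) (nhdsWithin 0 (Set.Iio 0)) atTop :=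
    tendsto_inv_nhdsGT_zero.comp hneg
  have h3 : Tendsto (fun t : ℝ => -(t⁻¹)) (nhdsWithin 0 (Set.Iio 0)) atTop := by
    simpa [inv_neg] using h2
  simpa [Function.comp_def] using tendsto_neg_atTop_atBot.comp h3

/-- For positive `ν` and `a`, the quantity `a * exp (-ν (a - t)/t) / t` tends to `0`
as `t → 0⁺`. -/
lemma aux_exp_div (ν a : ℝ) (hν : 0 < ν) (ha : 0 < a) :
    Tendsto (fun t : ℝ => a * Real.exp (-ν * ((a - t) / t)) / t)
      (nhdsWithin 0 (Set.Ioi 0)) (nhds 0) := by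
  have hcomp : Tendsto (fun t : ℝ => ν * a * t⁻¹) (nhdsWithin 0 (Set.Ioi 0)) atTop :=
    Tendsto.const_mul_atTop (by positivity) tendsto_inv_nhdsGT_zero
  have hbase : Tendsto (fun x : ℝ => x * Real.exp (-x)) atTop (nhds 0) := by
    simpa using Real.tendsto_pow_mul_exp_neg_atTop_nhds_zero 1
  have h0 : Tendsto (fun t : ℝ =>
      (Real.exp ν / ν) * ((ν * a * t⁻¹) * Real.exp (-(ν * a * t⁻¹))))
      (nhdsWithin 0 (Set.Ioi 0)) (nhds 0) := by
    have := (hbase.comp hcomp).const_mul (Real.exp ν / ν)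
    simpa using this
  apply h0.congr'
  filter_upwards [self_mem_nhdsWithin] with t ht
  have ht0 : (0 : ℝ) < t := ht
  have hexp : -ν * ((a - t) / t) = ν + -(ν * a * t⁻¹) := by
    field_simp
    ring
  rw [hexp, Real.exp_add]
  field_simp

/-- With the other arguments fixed at positive values, the new AND-operator tends to
`0` as its remaining argument tends to `0` (from either side), and the corresponding
difference quotient tends to `1`. -/
theorem Anu_limit_at_zero (ν : ℝ) (hν : 0 < ν) (M : ℕ) (hM : 0 < M)
    (i₀ : Fin M) (ρ : Fin M → ℝ) (hpos : ∀ j, j ≠ i₀ → 0 < ρ j) :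
    Filter.Tendsto (fun t : ℝ => Anu ν hM (Function.update ρ i₀ t))
      (nhdsWithin 0 {0}ᶜ) (nhds 0) ∧
    Filter.Tendsto (fun t : ℝ => Anu ν hM (Function.update ρ i₀ t) / t)
      (nhdsWithin 0 {0}ᶜ) (nhds 1) := by
  have hrmin : ∀ t : ℝ, (∀ j, j ≠ i₀ → t ≤ ρ j) →
      rmin hM (Function.update ρ i₀ t) = t := by
    intro t ht
    unfold rmin
    apply le_antisymm
    · exact (Finset.inf'_le (Function.update ρ i₀ t) (Finset.mem_univ i₀)).trans (by simp)
    · refine Finset.le_inf' _ _ fun j _ => ?_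
      rcases eq_or_ne j i₀ with rfl | h
      · simp
      · rw [Function.update_of_ne h]
        exact ht j h
  have hev : ∀ᶠ t in nhds (0 : ℝ), ∀ j, j ≠ i₀ → t < ρ j := by
    rw [Filter.eventually_all]
    intro j
    rcases eq_or_ne j i₀ with rfl | h
    · filter_upwards with t hj
      exact absurd rfl hj
    · filter_upwards [eventually_lt_nhds (hpos j h)] with t ht _
      exact ht
  have hsum : (∑ i : Fin M, if i = i₀ then (1 : ℝ) else 0) = 1 := by simp
  -- The key limit: the difference quotient tends to 1.
  have key : Tendsto (fun t : ℝ => Anu ν hM (Function.update ρ i₀ t) / t)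
      (nhdsWithin 0 {0}ᶜ) (nhds 1) := by
    rw [← nhdsLT_sup_nhdsGT (0 : ℝ), Filter.tendsto_sup]
    constructor
    · -- limit from the left
      have hnum : Tendsto (fun t : ℝ =>
          ∑ i, Real.exp ((1 + ν) * ((Function.update ρ i₀ t i - t) / t)))
          (nhdsWithin 0 (Set.Iio 0)) (nhds 1) := by
        suffices h : Tendsto (fun t : ℝ =>
            ∑ i, Real.exp ((1 + ν) * ((Function.update ρ i₀ t i - t) / t)))
            (nhdsWithin 0 (Set.Iio 0))
            (nhds (∑ i : Fin M, if i = i₀ then (1 : ℝ) else 0)) by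
          rwa [hsum] at h
        apply tendsto_finset_sum
        intro i _
        rcases eq_or_ne i i₀ with rfl | h
        · rw [if_pos rfl]
          simp only [Function.update_self, sub_self, zero_div, mul_zero, Real.exp_zero]
          exact tendsto_const_nhds
        · rw [if_neg h]
          simp only [Function.update_of_ne h]
          have h1 : Tendsto (fun t : ℝ => (ρ i - t) * t⁻¹)
              (nhdsWithin 0 (Set.Iio 0)) atBot := by
            refine Filter.Tendsto.pos_mul_atBot (hpos i h) ?_ aux_inv_atBot
            simpa using (tendsto_const_nhds.sub
              (tendsto_id.mono_left nhdsWithin_le_nhds) :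
                Tendsto (fun t : ℝ => ρ i - t) (nhdsWithin 0 (Set.Iio 0)) (nhds (ρ i - 0)))
          have h2 : Tendsto (fun t : ℝ => (1 + ν) * ((ρ i - t) / t))
              (nhdsWithin 0 (Set.Iio 0)) atBot := by
            simpa [div_eq_mul_inv] using h1.const_mul_atBot (by linarith : (0:ℝ) < 1 + ν)
          exact Real.tendsto_exp_atBot.comp h2
      have hden : Tendsto (fun t : ℝ =>
          ∑ i, Real.exp (ν * ((Function.update ρ i₀ t i - t) / t)))
          (nhdsWithin 0 (Set.Iio 0)) (nhds 1) := by
        suffices h : Tendsto (fun t : ℝ =>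
            ∑ i, Real.exp (ν * ((Function.update ρ i₀ t i - t) / t)))
            (nhdsWithin 0 (Set.Iio 0))
            (nhds (∑ i : Fin M, if i = i₀ then (1 : ℝ) else 0)) by
          rwa [hsum] at h
        apply tendsto_finset_sum
        intro i _
        rcases eq_or_ne i i₀ with rfl | h
        · rw [if_pos rfl]
          simp only [Function.update_self, sub_self, zero_div, mul_zero, Real.exp_zero]
          exact tendsto_const_nhds
        · rw [if_neg h]
          simp only [Function.update_of_ne h]
          have h1 : Tendsto (fun t : ℝ => (ρ i - t) * t⁻¹)
              (nhdsWithin 0 (Set.Iio 0)) atBot := by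
            refine Filter.Tendsto.pos_mul_atBot (hpos i h) ?_ aux_inv_atBot
            simpa using (tendsto_const_nhds.sub
              (tendsto_id.mono_left nhdsWithin_le_nhds) :
                Tendsto (fun t : ℝ => ρ i - t) (nhdsWithin 0 (Set.Iio 0)) (nhds (ρ i - 0)))
          have h2 : Tendsto (fun t : ℝ => ν * ((ρ i - t) / t))
              (nhdsWithin 0 (Set.Iio 0)) atBot := by
            simpa [div_eq_mul_inv] using h1.const_mul_atBot hν
          exact Real.tendsto_exp_atBot.comp h2
      have hL : Tendsto (fun t : ℝ =>
          (∑ i, Real.exp ((1 + ν) * ((Function.update ρ i₀ t i - t) / t))) /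
          (∑ i, Real.exp (ν * ((Function.update ρ i₀ t i - t) / t))))
          (nhdsWithin 0 (Set.Iio 0)) (nhds 1) := by
        simpa [Pi.div_def] using hnum.div hden one_ne_zero
      apply hL.congr'
      filter_upwards [hev.filter_mono nhdsWithin_le_nhds, self_mem_nhdsWithin] with t ht ht0
      have ht0' : t < 0 := ht0
      have hr : rmin hM (Function.update ρ i₀ t) = t :=
        hrmin t fun j hj => (ht j hj).le
      have hB : 0 < ∑ i, Real.exp (ν * ((Function.update ρ i₀ t i - t) / t)) :=
        Finset.sum_pos (fun i _ => Real.exp_pos _)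
          (Finset.univ_nonempty_iff.mpr (Fin.pos_iff_nonempty.mp hM))
      rw [Anu, hr, if_pos ht0', ← Finset.mul_sum, div_div,
        mul_comm (∑ i, Real.exp (ν * ((Function.update ρ i₀ t i - t) / t))) t,
        ← div_div, mul_div_cancel_left₀ _ ht0'.ne]
    · -- limit from the right
      have hnum : Tendsto (fun t : ℝ =>
          ∑ i, Function.update ρ i₀ t i *
            Real.exp (-ν * ((Function.update ρ i₀ t i - t) / t)) / t)
          (nhdsWithin 0 (Set.Ioi 0)) (nhds 1) := by
        suffices h : Tendsto (fun t : ℝ =>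
            ∑ i, Function.update ρ i₀ t i *
              Real.exp (-ν * ((Function.update ρ i₀ t i - t) / t)) / t)
            (nhdsWithin 0 (Set.Ioi 0))
            (nhds (∑ i : Fin M, if i = i₀ then (1 : ℝ) else 0)) by
          rwa [hsum] at h
        apply tendsto_finset_sum
        intro i _
        rcases eq_or_ne i i₀ with rfl | h
        · rw [if_pos rfl]
          simp only [Function.update_self, sub_self, zero_div, mul_zero, Real.exp_zero,
            mul_one]
          apply Tendsto.congr' _ tendsto_const_nhds
          filter_upwards [self_mem_nhdsWithin] with t ht
          have ht0 : (0 : ℝ) < t := ht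
          exact (div_self ht0.ne').symm
        · rw [if_neg h]
          simp only [Function.update_of_ne h]
          exact aux_exp_div ν (ρ i) hν (hpos i h)
      have hden : Tendsto (fun t : ℝ =>
          ∑ i, Real.exp (-ν * ((Function.update ρ i₀ t i - t) / t)))
          (nhdsWithin 0 (Set.Ioi 0)) (nhds 1) := by
        suffices h : Tendsto (fun t : ℝ =>
            ∑ i, Real.exp (-ν * ((Function.update ρ i₀ t i - t) / t)))
            (nhdsWithin 0 (Set.Ioi 0))
            (nhds (∑ i : Fin M, if i = i₀ then (1 : ℝ) else 0)) by
          rwa [hsum] at h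
        apply tendsto_finset_sum
        intro i _
        rcases eq_or_ne i i₀ with rfl | h
        · rw [if_pos rfl]
          simp only [Function.update_self, sub_self, zero_div, mul_zero, Real.exp_zero]
          exact tendsto_const_nhds
        · rw [if_neg h]
          simp only [Function.update_of_ne h]
          have h1 : Tendsto (fun t : ℝ => (ρ i - t) * t⁻¹)
              (nhdsWithin 0 (Set.Ioi 0)) atTop := by
            refine Filter.Tendsto.pos_mul_atTop (hpos i h) ?_ tendsto_inv_nhdsGT_zero
            simpa using (tendsto_const_nhds.sub
              (tendsto_id.mono_left nhdsWithin_le_nhds) :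
                Tendsto (fun t : ℝ => ρ i - t) (nhdsWithin 0 (Set.Ioi 0)) (nhds (ρ i - 0)))
          have h2 : Tendsto (fun t : ℝ => -ν * ((ρ i - t) / t))
              (nhdsWithin 0 (Set.Ioi 0)) atBot := by
            have h3 : Tendsto (fun t : ℝ => ν * ((ρ i - t) * t⁻¹))
                (nhdsWithin 0 (Set.Ioi 0)) atTop := h1.const_mul_atTop hν
            have h4 := tendsto_neg_atTop_atBot.comp h3
            simpa [div_eq_mul_inv, neg_mul, Function.comp_def] using h4
          exact Real.tendsto_exp_atBot.comp h2
      have hR : Tendsto (fun t : ℝ =>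
          (∑ i, Function.update ρ i₀ t i *
            Real.exp (-ν * ((Function.update ρ i₀ t i - t) / t)) / t) /
          (∑ i, Real.exp (-ν * ((Function.update ρ i₀ t i - t) / t))))
          (nhdsWithin 0 (Set.Ioi 0)) (nhds 1) := by
        simpa [Pi.div_def] using hnum.div hden one_ne_zero
      apply hR.congr'
      filter_upwards [hev.filter_mono nhdsWithin_le_nhds, self_mem_nhdsWithin] with t ht ht0
      have ht0' : (0 : ℝ) < t := ht0
      have hr : rmin hM (Function.update ρ i₀ t) = t :=
        hrmin t fun j hj => (ht j hj).le
      rw [Anu, hr, if_neg (not_lt.mpr ht0'.le), if_pos ht0', ← Finset.sum_div,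
        div_right_comm]
  refine ⟨?_, key⟩
  have hid : Tendsto (fun t : ℝ => t) (nhdsWithin 0 {0}ᶜ) (nhds 0) :=
    tendsto_id.mono_left nhdsWithin_le_nhds
  have h := key.mul hid
  rw [one_mul] at h
  apply h.congr'
  filter_upwards [self_mem_nhdsWithin] with t ht
  exact div_mul_cancel₀ _ ht
end

section
/- Suppose A : (Fin M → ℝ) → ℝ is scale-invariant (A(αρ) = α·A(ρ) for all α ≥ 0), sound, continuous, and min/max bounded, and fix ρ₁ ≠ 0 and positive reference values ρ̄_2,…,ρ̄_M > 0. Then lim_{ε→0} A(ε, ρ̄₂,…,ρ̄_M)/ε = 1 holds if and only if lim_{c→∞} A(ρ₁, c·ρ̄₂,…,c·ρ̄_M) = ρ₁ (where along the limit ε is taken with the same sign as ρ₁ and c = ρ₁/ε). -/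
/-- Proposition 4: for a scale-invariant, sound, continuous, min/max bounded
AND-operator, the slope-one condition at a zero crossing of one argument is equivalent
to saturation at that argument's value as all other arguments grow without bound. -/
theorem slope_one_iff_saturation
    (M : ℕ) (hM : 0 < M) (A : (Fin M → ℝ) → ℝ)
    (hscale : ∀ α : ℝ, 0 ≤ α → ∀ ρ : Fin M → ℝ, A (fun i => α * ρ i) = α * A ρ)
    (hsound : ∀ ρ : Fin M → ℝ, 0 ≤ A ρ ↔ ∀ i, 0 ≤ ρ i)
    (hcont : Continuous A)
    (hbound : ∀ ρ : Fin M → ℝ, rmin hM ρ ≤ A ρ ∧ A ρ ≤ rmax hM ρ)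
    (i₀ : Fin M) (r₁ : ℝ) (hr₁ : r₁ ≠ 0)
    (ρbar : Fin M → ℝ) (hρbar : ∀ j, j ≠ i₀ → 0 < ρbar j) :
    Filter.Tendsto (fun ε : ℝ => A (Function.update ρbar i₀ ε) / ε)
        (nhdsWithin 0 (if 0 < r₁ then Set.Ioi 0 else Set.Iio 0)) (nhds 1) ↔
      Filter.Tendsto (fun c : ℝ => A (Function.update (fun j => c * ρbar j) i₀ r₁))
        Filter.atTop (nhds r₁) := by
  -- key algebraic identity from scale invariance
  have key : ∀ c : ℝ, 0 < c →
      A (Function.update (fun j => c * ρbar j) i₀ r₁)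
        = r₁ * (A (Function.update ρbar i₀ (r₁ / c)) / (r₁ / c)) := by
    intro c hc
    have h1 : (fun j => c * Function.update ρbar i₀ (r₁ / c) j)
        = Function.update (fun j => c * ρbar j) i₀ r₁ := by
      funext j
      by_cases hj : j = i₀
      · subst hj
        simp [Function.update_self, mul_div_cancel₀ _ hc.ne']
      · simp [Function.update_of_ne hj]
    have h2 := hscale c hc.le (Function.update ρbar i₀ (r₁ / c))
    rw [h1] at h2
    rw [h2]
    field_simp
  set g : ℝ → ℝ := fun ε => A (Function.update ρbar i₀ ε) / ε with hg
  set h : ℝ → ℝ := fun c => A (Function.update (fun j => c * ρbar j) i₀ r₁) with hh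
  rcases hr₁.lt_or_gt with hneg | hpos
  · -- r₁ < 0, filter is 𝓝[<] 0
    rw [if_neg (not_lt.mpr hneg.le)]
    have m1 : Filter.Tendsto (fun c : ℝ => r₁ / c) Filter.atTop (nhdsWithin 0 (Set.Iio 0)) := by
      rw [tendsto_nhdsWithin_iff]
      constructor
      · simpa [div_eq_mul_inv] using (tendsto_inv_atTop_zero (𝕜 := ℝ)).const_mul r₁
      · filter_upwards [Filter.eventually_gt_atTop (0 : ℝ)] with c hc
        exact div_neg_of_neg_of_pos hneg hc
    have m2 : Filter.Tendsto (fun ε : ℝ => r₁ / ε) (nhdsWithin 0 (Set.Iio 0)) Filter.atTop := by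
      have hneg' : Filter.Tendsto (fun ε : ℝ => -ε) (nhdsWithin 0 (Set.Iio 0))
          (nhdsWithin 0 (Set.Ioi 0)) := by
        rw [tendsto_nhdsWithin_iff]
        refine ⟨by simpa using ((continuous_neg.tendsto (0 : ℝ)).mono_left nhdsWithin_le_nhds), ?_⟩
        filter_upwards [self_mem_nhdsWithin] with ε (hε : ε < 0)
        simpa using hε
      have := (tendsto_inv_nhdsGT_zero.comp hneg').const_mul_atTop (neg_pos.mpr hneg)
      refine this.congr fun ε => ?_
      simp only [Function.comp_apply, inv_neg, div_eq_mul_inv]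
      ring
    constructor
    · intro hL
      have : Filter.Tendsto (fun c => r₁ * g (r₁ / c)) Filter.atTop (nhds (r₁ * 1)) :=
        (hL.comp m1).const_mul r₁
      rw [mul_one] at this
      refine this.congr' ?_
      filter_upwards [Filter.eventually_gt_atTop (0 : ℝ)] with c hc
      exact (key c hc).symm
    · intro hR
      have : Filter.Tendsto (fun ε => r₁⁻¹ * h (r₁ / ε)) (nhdsWithin 0 (Set.Iio 0))
          (nhds (r₁⁻¹ * r₁)) := (hR.comp m2).const_mul r₁⁻¹
      rw [inv_mul_cancel₀ hr₁] at this
      refine this.congr' ?_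
      filter_upwards [self_mem_nhdsWithin] with ε (hε : ε < 0)
      have hc : 0 < r₁ / ε := div_pos_of_neg_of_neg hneg hε
      have hkey := key _ hc
      rw [div_div_cancel₀ hr₁] at hkey
      simp only [hh, hg] at hkey ⊢
      rw [hkey, ← mul_assoc, inv_mul_cancel₀ hr₁, one_mul]
  · -- 0 < r₁
    rw [if_pos hpos]
    have m1 : Filter.Tendsto (fun c : ℝ => r₁ / c) Filter.atTop (nhdsWithin 0 (Set.Ioi 0)) := by
      rw [tendsto_nhdsWithin_iff]
      constructor
      · simpa [div_eq_mul_inv] using (tendsto_inv_atTop_zero (𝕜 := ℝ)).const_mul r₁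
      · filter_upwards [Filter.eventually_gt_atTop (0 : ℝ)] with c hc
        exact div_pos hpos hc
    have m2 : Filter.Tendsto (fun ε : ℝ => r₁ / ε) (nhdsWithin 0 (Set.Ioi 0)) Filter.atTop := by
      have := tendsto_inv_nhdsGT_zero.const_mul_atTop hpos
      refine this.congr fun ε => ?_
      simp [div_eq_mul_inv]
    constructor
    · intro hL
      have : Filter.Tendsto (fun c => r₁ * g (r₁ / c)) Filter.atTop (nhds (r₁ * 1)) :=
        (hL.comp m1).const_mul r₁
      rw [mul_one] at this
      refine this.congr' ?_
      filter_upwards [Filter.eventually_gt_atTop (0 : ℝ)] with c hc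
      exact (key c hc).symm
    · intro hR
      have : Filter.Tendsto (fun ε => r₁⁻¹ * h (r₁ / ε)) (nhdsWithin 0 (Set.Ioi 0))
          (nhds (r₁⁻¹ * r₁)) := (hR.comp m2).const_mul r₁⁻¹
      rw [inv_mul_cancel₀ hr₁] at this
      refine this.congr' ?_
      filter_upwards [self_mem_nhdsWithin] with ε (hε : ε ∈ Set.Ioi 0)
      have hc : 0 < r₁ / ε := div_pos hpos hε
      have hkey := key _ hc
      rw [div_div_cancel₀ hr₁] at hkey
      simp only [hh, hg] at hkey ⊢
      rw [hkey, ← mul_assoc, inv_mul_cancel₀ hr₁, one_mul]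
end

section
/- Shadow-lifting for the new operator: for ν > 0, M ≥ 1, ρ ≠ 0, and any index i, the partial derivative of A_ν with respect to its i-th argument at the constant point (ρ,…,ρ) exists and equals 1/M. In particular it is strictly positive, so A_ν satisfies the shadow-lifting property. -/
open Finset

lemma sum_update (M : ℕ) (i : Fin M) (r t : ℝ) (f : ℝ → ℝ) :
    ∑ j, f (Function.update (fun _ : Fin M => r) i t j) = f t + ((M:ℝ) - 1) * f r := by
  rw [← Finset.add_sum_erase _ _ (Finset.mem_univ i), Function.update_self]
  congr 1
  rw [Finset.sum_congr rfl fun j hj => by rw [Function.update_of_ne (Finset.mem_erase.mp hj).1]]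
  rw [Finset.sum_const, Finset.card_erase_of_mem (Finset.mem_univ i), Finset.card_univ,
    Fintype.card_fin, nsmul_eq_mul, Nat.cast_pred i.pos]

lemma rmin_update_left {M : ℕ} (hM : 0 < M) (i : Fin M) {r t : ℝ} (h : t ≤ r) :
    rmin hM (Function.update (fun _ : Fin M => r) i t) = t := by
  unfold rmin
  apply le_antisymm
  · have := Finset.inf'_le (Function.update (fun _ : Fin M => r) i t) (Finset.mem_univ i)
    rwa [Function.update_self] at this
  · apply Finset.le_inf'
    intro j _
    rcases eq_or_ne j i with rfl | hj
    · rw [Function.update_self]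
    · rw [Function.update_of_ne hj]; exact h

lemma rmin_update_right {M : ℕ} (hM : 0 < M) (hM2 : 1 < M) (i : Fin M) {r t : ℝ} (h : r ≤ t) :
    rmin hM (Function.update (fun _ : Fin M => r) i t) = r := by
  obtain ⟨j, hj⟩ := Fintype.exists_ne_of_one_lt_card (by simpa using hM2) i
  unfold rmin
  apply le_antisymm
  · have := Finset.inf'_le (Function.update (fun _ : Fin M => r) i t) (Finset.mem_univ j)
    rwa [Function.update_of_ne hj] at this
  · apply Finset.le_inf'
    intro k _
    rcases eq_or_ne k i with rfl | hk
    · rw [Function.update_self]; exact h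
    · rw [Function.update_of_ne hk]

lemma Anu_const (ν : ℝ) {M : ℕ} (hM : 0 < M) {t : ℝ} (ht : t ≠ 0) :
    Anu ν hM (fun _ => t) = t := by
  have hM0 : (M:ℝ) ≠ 0 := Nat.cast_ne_zero.mpr hM.ne'
  have hrm : rmin hM (fun _ : Fin M => t) = t := by
    unfold rmin; exact Finset.inf'_const _ _
  unfold Anu
  rw [hrm]
  rcases ht.lt_or_gt with h | h
  · rw [if_pos h]
    simp only [sub_self, zero_div, mul_zero, Real.exp_zero, mul_one, Finset.sum_const,
      Finset.card_univ, Fintype.card_fin, nsmul_eq_mul]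
    exact mul_div_cancel_left₀ t hM0
  · rw [if_neg (not_lt.mpr h.le), if_pos h]
    simp only [sub_self, zero_div, mul_zero, Real.exp_zero, mul_one, Finset.sum_const,
      Finset.card_univ, Fintype.card_fin, nsmul_eq_mul]
    exact mul_div_cancel_left₀ t hM0

/-- Shadow-lifting for the new operator: at a nonzero constant point, each partial
derivative of `A_ν` exists and equals `1/M`, in particular it is strictly positive. -/
theorem Anu_shadow_lifting (ν : ℝ) (hν : 0 < ν) (M : ℕ) (hM : 0 < M)
    (r : ℝ) (hr : r ≠ 0) (i : Fin M) :
    HasDerivAt (fun t : ℝ => Anu ν hM (Function.update (fun _ : Fin M => r) i t))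
      (1 / M) r ∧ (0 : ℝ) < 1 / M := by
  have hM0 : (M:ℝ) ≠ 0 := Nat.cast_ne_zero.mpr hM.ne'
  refine ⟨?_, one_div_pos.mpr (Nat.cast_pos.mpr hM)⟩
  rcases Nat.lt_or_ge 1 M with hM2 | hM1
  · -- M ≥ 2
    have hA : HasDerivAt (fun t : ℝ => (r - t) / t) (-(1/r)) r := by
      have h := ((hasDerivAt_const r r).sub (hasDerivAt_id' r)).div (hasDerivAt_id' r) hr
      refine h.congr_deriv ?_
      simp only [Pi.sub_apply]
      field_simp
      ring
    have hB : HasDerivAt (fun t : ℝ => (t - r) / r) (1/r) r :=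
      ((hasDerivAt_id r).sub_const r).div_const r
    rcases hr.lt_or_gt with hneg | hpos
    · -- r < 0
      have keyL : ∀ t : ℝ, t ≤ r →
          Anu ν hM (Function.update (fun _ : Fin M => r) i t) =
            (t + ((M:ℝ) - 1) * (t * Real.exp ((1 + ν) * ((r - t) / t)))) /
              (1 + ((M:ℝ) - 1) * Real.exp (ν * ((r - t) / t))) := by
        intro t htr
        have ht0 : t < 0 := lt_of_le_of_lt htr hneg
        have hrm := rmin_update_left hM i htr
        unfold Anu
        rw [hrm, if_pos ht0]
        have h1 := sum_update M i r t (fun x => t * Real.exp ((1 + ν) * ((x - t) / t)))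
        have h2 := sum_update M i r t (fun x => Real.exp (ν * ((x - t) / t)))
        rw [h1, h2]
        simp only [sub_self, zero_div, mul_zero, Real.exp_zero, mul_one]
      have keyR : ∀ t : ℝ, r ≤ t →
          Anu ν hM (Function.update (fun _ : Fin M => r) i t) =
            (r * Real.exp ((1 + ν) * ((t - r) / r)) + ((M:ℝ) - 1) * r) /
              (Real.exp (ν * ((t - r) / r)) + ((M:ℝ) - 1)) := by
        intro t htr
        have hrm := rmin_update_right hM hM2 i htr
        unfold Anu
        rw [hrm, if_pos hneg]
        have h1 := sum_update M i r t (fun x => r * Real.exp ((1 + ν) * ((x - r) / r)))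
        have h2 := sum_update M i r t (fun x => Real.exp (ν * ((x - r) / r)))
        rw [h1, h2]
        simp only [sub_self, zero_div, mul_zero, Real.exp_zero, mul_one]
      have hexp1 : HasDerivAt (fun t : ℝ => Real.exp ((1 + ν) * ((r - t) / t)))
          (-((1 + ν) / r)) r := by
        have h := (hA.const_mul (1 + ν)).exp
        convert h using 1
        simp only [sub_self, zero_div, mul_zero, Real.exp_zero, one_mul]
        ring
      have hexp2 : HasDerivAt (fun t : ℝ => Real.exp (ν * ((r - t) / t))) (-(ν / r)) r := by
        have h := (hA.const_mul ν).exp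
        convert h using 1
        simp only [sub_self, zero_div, mul_zero, Real.exp_zero, one_mul]
        ring
      have hexp3 : HasDerivAt (fun t : ℝ => Real.exp ((1 + ν) * ((t - r) / r)))
          ((1 + ν) / r) r := by
        have h := (hB.const_mul (1 + ν)).exp
        convert h using 1
        simp only [sub_self, zero_div, mul_zero, Real.exp_zero, one_mul]
        ring
      have hexp4 : HasDerivAt (fun t : ℝ => Real.exp (ν * ((t - r) / r))) (ν / r) r := by
        have h := (hB.const_mul ν).exp
        convert h using 1
        simp only [sub_self, zero_div, mul_zero, Real.exp_zero, one_mul]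
        ring
      have hgL : HasDerivAt (fun t : ℝ =>
          (t + ((M:ℝ) - 1) * (t * Real.exp ((1 + ν) * ((r - t) / t)))) /
            (1 + ((M:ℝ) - 1) * Real.exp (ν * ((r - t) / t)))) (1 / (M:ℝ)) r := by
        have hN : HasDerivAt
            (fun t : ℝ => t + ((M:ℝ) - 1) * (t * Real.exp ((1 + ν) * ((r - t) / t))))
            (1 + ((M:ℝ) - 1) * (1 * Real.exp ((1 + ν) * ((r - r) / r)) + r * -((1 + ν) / r))) r :=
          (hasDerivAt_id r).add (((hasDerivAt_id r).mul hexp1).const_mul _)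
        have hD : HasDerivAt (fun t : ℝ => 1 + ((M:ℝ) - 1) * Real.exp (ν * ((r - t) / t)))
            (0 + ((M:ℝ) - 1) * -(ν / r)) r :=
          (hasDerivAt_const r 1).add (hexp2.const_mul _)
        have hx : (1 : ℝ) + ((M:ℝ) - 1) * Real.exp (ν * ((r - r) / r)) ≠ 0 := by
          simp only [sub_self, zero_div, mul_zero, Real.exp_zero, mul_one]
          intro h; apply hM0; linarith
        have h := hN.div hD hx
        refine h.congr_deriv ?_
        simp only [sub_self, zero_div, mul_zero, Real.exp_zero, mul_one, one_mul]
        rw [show (1:ℝ) + ((M:ℝ) - 1) = (M:ℝ) by ring]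
        field_simp
        ring
      have hgR : HasDerivAt (fun t : ℝ =>
          (r * Real.exp ((1 + ν) * ((t - r) / r)) + ((M:ℝ) - 1) * r) /
            (Real.exp (ν * ((t - r) / r)) + ((M:ℝ) - 1))) (1 / (M:ℝ)) r := by
        have hN : HasDerivAt
            (fun t : ℝ => r * Real.exp ((1 + ν) * ((t - r) / r)) + ((M:ℝ) - 1) * r)
            (r * ((1 + ν) / r)) r := (hexp3.const_mul r).add_const _
        have hD : HasDerivAt (fun t : ℝ => Real.exp (ν * ((t - r) / r)) + ((M:ℝ) - 1))
            (ν / r) r := hexp4.add_const _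
        have hx : Real.exp (ν * ((r - r) / r)) + ((M:ℝ) - 1) ≠ 0 := by
          simp only [sub_self, zero_div, mul_zero, Real.exp_zero]
          intro h; apply hM0; linarith
        have h := hN.div hD hx
        refine h.congr_deriv ?_
        simp only [sub_self, zero_div, mul_zero, Real.exp_zero, mul_one, one_mul]
        rw [show (1:ℝ) + ((M:ℝ) - 1) = (M:ℝ) by ring]
        field_simp
        ring
      have hLa : HasDerivWithinAt
          (fun t : ℝ => Anu ν hM (Function.update (fun _ : Fin M => r) i t))
          (1 / (M:ℝ)) (Set.Iic r) r := by
        apply hgL.hasDerivWithinAt.congr_of_eventuallyEq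
        · filter_upwards [self_mem_nhdsWithin] with t ht
          exact keyL t ht
        · exact keyL r le_rfl
      have hRa : HasDerivWithinAt
          (fun t : ℝ => Anu ν hM (Function.update (fun _ : Fin M => r) i t))
          (1 / (M:ℝ)) (Set.Ici r) r := by
        apply hgR.hasDerivWithinAt.congr_of_eventuallyEq
        · filter_upwards [self_mem_nhdsWithin] with t ht
          exact keyR t ht
        · exact keyR r le_rfl
      have h := hLa.union hRa
      rw [Set.Iic_union_Ici] at h
      exact hasDerivWithinAt_univ.mp h
    · -- r > 0
      have keyL : ∀ t : ℝ, 0 < t → t ≤ r →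
          Anu ν hM (Function.update (fun _ : Fin M => r) i t) =
            (t + ((M:ℝ) - 1) * (r * Real.exp (-ν * ((r - t) / t)))) /
              (1 + ((M:ℝ) - 1) * Real.exp (-ν * ((r - t) / t))) := by
        intro t ht0 htr
        have hrm := rmin_update_left hM i htr
        unfold Anu
        rw [hrm, if_neg (not_lt.mpr ht0.le), if_pos ht0]
        have h1 := sum_update M i r t (fun x => x * Real.exp (-ν * ((x - t) / t)))
        have h2 := sum_update M i r t (fun x => Real.exp (-ν * ((x - t) / t)))
        rw [h1, h2]
        simp only [sub_self, zero_div, mul_zero, Real.exp_zero, mul_one]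
      have keyR : ∀ t : ℝ, r ≤ t →
          Anu ν hM (Function.update (fun _ : Fin M => r) i t) =
            (t * Real.exp (-ν * ((t - r) / r)) + ((M:ℝ) - 1) * r) /
              (Real.exp (-ν * ((t - r) / r)) + ((M:ℝ) - 1)) := by
        intro t htr
        have hrm := rmin_update_right hM hM2 i htr
        unfold Anu
        rw [hrm, if_neg (not_lt.mpr hpos.le), if_pos hpos]
        have h1 := sum_update M i r t (fun x => x * Real.exp (-ν * ((x - r) / r)))
        have h2 := sum_update M i r t (fun x => Real.exp (-ν * ((x - r) / r)))
        rw [h1, h2]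
        simp only [sub_self, zero_div, mul_zero, Real.exp_zero, mul_one]
      have hexpL : HasDerivAt (fun t : ℝ => Real.exp (-ν * ((r - t) / t))) (ν / r) r := by
        have h := (hA.const_mul (-ν)).exp
        convert h using 1
        simp only [sub_self, zero_div, mul_zero, Real.exp_zero, one_mul]
        ring
      have hexpR : HasDerivAt (fun t : ℝ => Real.exp (-ν * ((t - r) / r))) (-(ν / r)) r := by
        have h := (hB.const_mul (-ν)).exp
        convert h using 1
        simp only [sub_self, zero_div, mul_zero, Real.exp_zero, one_mul]
        ring
      have hgL : HasDerivAt (fun t : ℝ =>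
          (t + ((M:ℝ) - 1) * (r * Real.exp (-ν * ((r - t) / t)))) /
            (1 + ((M:ℝ) - 1) * Real.exp (-ν * ((r - t) / t)))) (1 / (M:ℝ)) r := by
        have hN : HasDerivAt (fun t : ℝ => t + ((M:ℝ) - 1) * (r * Real.exp (-ν * ((r - t) / t))))
            (1 + ((M:ℝ) - 1) * (r * (ν / r))) r :=
          (hasDerivAt_id r).add ((hexpL.const_mul r).const_mul _)
        have hD : HasDerivAt (fun t : ℝ => 1 + ((M:ℝ) - 1) * Real.exp (-ν * ((r - t) / t)))
            (0 + ((M:ℝ) - 1) * (ν / r)) r :=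
          (hasDerivAt_const r 1).add (hexpL.const_mul _)
        have hx : (1 : ℝ) + ((M:ℝ) - 1) * Real.exp (-ν * ((r - r) / r)) ≠ 0 := by
          simp only [sub_self, zero_div, mul_zero, Real.exp_zero, mul_one]
          intro h; apply hM0; linarith
        have h := hN.div hD hx
        refine h.congr_deriv ?_
        simp only [sub_self, zero_div, mul_zero, Real.exp_zero, mul_one]
        rw [show (1:ℝ) + ((M:ℝ) - 1) = (M:ℝ) by ring]
        field_simp
        ring
      have hgR : HasDerivAt (fun t : ℝ =>
          (t * Real.exp (-ν * ((t - r) / r)) + ((M:ℝ) - 1) * r) /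
            (Real.exp (-ν * ((t - r) / r)) + ((M:ℝ) - 1))) (1 / (M:ℝ)) r := by
        have hN : HasDerivAt (fun t : ℝ => t * Real.exp (-ν * ((t - r) / r)) + ((M:ℝ) - 1) * r)
            (1 * Real.exp (-ν * ((r - r) / r)) + r * -(ν / r)) r :=
          ((hasDerivAt_id r).mul hexpR).add_const _
        have hD : HasDerivAt (fun t : ℝ => Real.exp (-ν * ((t - r) / r)) + ((M:ℝ) - 1))
            (-(ν / r)) r := hexpR.add_const _
        have hx : Real.exp (-ν * ((r - r) / r)) + ((M:ℝ) - 1) ≠ 0 := by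
          simp only [sub_self, zero_div, mul_zero, Real.exp_zero]
          intro h; apply hM0; linarith
        have h := hN.div hD hx
        refine h.congr_deriv ?_
        simp only [sub_self, zero_div, mul_zero, Real.exp_zero, mul_one, one_mul]
        rw [show (1:ℝ) + ((M:ℝ) - 1) = (M:ℝ) by ring]
        field_simp
        ring
      have hLa : HasDerivWithinAt
          (fun t : ℝ => Anu ν hM (Function.update (fun _ : Fin M => r) i t))
          (1 / (M:ℝ)) (Set.Iic r) r := by
        apply hgL.hasDerivWithinAt.congr_of_eventuallyEq
        · filter_upwards [self_mem_nhdsWithin,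
            (eventually_gt_nhds hpos).filter_mono nhdsWithin_le_nhds] with t ht1 ht2
          exact keyL t ht2 ht1
        · exact keyL r hpos le_rfl
      have hRa : HasDerivWithinAt
          (fun t : ℝ => Anu ν hM (Function.update (fun _ : Fin M => r) i t))
          (1 / (M:ℝ)) (Set.Ici r) r := by
        apply hgR.hasDerivWithinAt.congr_of_eventuallyEq
        · filter_upwards [self_mem_nhdsWithin] with t ht
          exact keyR t ht
        · exact keyR r le_rfl
      have h := hLa.union hRa
      rw [Set.Iic_union_Ici] at h
      exact hasDerivWithinAt_univ.mp h
  · -- M = 1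
    have hM1 : M = 1 := le_antisymm hM1 hM
    subst hM1
    have hev : (fun t : ℝ => Anu ν hM (Function.update (fun _ : Fin 1 => r) i t))
        =ᶠ[nhds r] id := by
      filter_upwards [eventually_ne_nhds hr] with t ht
      have hupd : Function.update (fun _ : Fin 1 => r) i t = fun _ => t := by
        funext j; rw [Subsingleton.elim j i, Function.update_self]
      show Anu ν hM (Function.update (fun _ : Fin 1 => r) i t) = t
      rw [hupd, Anu_const ν hM ht]
    have h := (hasDerivAt_id r).congr_of_eventuallyEq hev
    simpa using h
end
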